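/- Let G be a group and L a normal subgroup of G, and let G ×_L G := {(a₁,a₂) ∈ G × G : a₁a₂⁻¹ ∈ L} be the relatively independent self-product, a subgroup of G × G. Then the commutator subgroup of G ×_L G equals [G,G] ×_{⁅G,L⁆} [G,G] := {(a₁,a₂) ∈ [G,G] × [G,G] : a₁a₂⁻¹ ∈ ⁅G,L⁆}, as subgroups of G × G. (Lemma 2.7 of the paper; stated there for nilpotent Lie groups, but the assertion and proof are purely group-theoretic.) -/

import Mathlib

open scoped commutatorElement

section Aux
variable {G : Type*} [Group G]

lemma central_commutator_left {z a b : G} (hz : z ∈ Subgroup.center G) :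
    ⁅z * a, b⁆ = ⁅a, b⁆ := by
  rw [Subgroup.mem_center_iff] at hz
  calc ⁅z * a, b⁆ = z * (a * b * a⁻¹) * z⁻¹ * b⁻¹ := by group
    _ = (a * b * a⁻¹) * z * z⁻¹ * b⁻¹ := by rw [← hz]
    _ = ⁅a, b⁆ := by group

lemma central_commutator {z w a b : G} (hz : z ∈ Subgroup.center G)
    (hw : w ∈ Subgroup.center G) : ⁅z * a, w * b⁆ = ⁅a, b⁆ := by
  rw [central_commutator_left hz, ← commutatorElement_inv, central_commutator_left hw,
    commutatorElement_inv]

lemma key_commutator (L : Subgroup G) [L.Normal] {l m : G} (hl : l ∈ L) (hm : m ∈ L)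
    (a b : G) : ⁅l * a, m * b⁆ * ⁅a, b⁆⁻¹ ∈ ⁅(⊤ : Subgroup G), L⁆ := by
  set N := ⁅(⊤ : Subgroup G), L⁆ with hNdef
  let f := QuotientGroup.mk' N
  have hc : ∀ x ∈ L, f x ∈ Subgroup.center (G ⧸ N) := by
    intro x hx
    rw [Subgroup.mem_center_iff]
    intro y
    obtain ⟨g, rfl⟩ := QuotientGroup.mk'_surjective N y
    have h1 : f ⁅g, x⁆ = 1 := (QuotientGroup.eq_one_iff _).mpr
      (Subgroup.commutator_mem_commutator (Subgroup.mem_top g) hx)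
    rw [map_commutatorElement, commutatorElement_eq_one_iff_mul_comm] at h1
    exact h1
  have h2 : f (⁅l * a, m * b⁆ * ⁅a, b⁆⁻¹) = 1 := by
    rw [map_mul, map_inv, map_commutatorElement, map_commutatorElement, map_mul, map_mul,
      central_commutator (hc l hl) (hc m hm)]
    group
  exact (QuotientGroup.eq_one_iff _).mp h2

end Aux


/-- The relatively independent self-product `G ×_L G` of a group `G` over a normal
subgroup `L`, i.e. the subgroup `{(a₁, a₂) ∈ G × G : a₁ * a₂⁻¹ ∈ L}` of `G × G`. -/
def relProd {G : Type*} [Group G] (L : Subgroup G) [hN : L.Normal] : Subgroup (G × G) where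
  carrier := {p : G × G | p.1 * p.2⁻¹ ∈ L}
  one_mem' := by simpa using L.one_mem
  mul_mem' := by
    rintro ⟨a₁, a₂⟩ ⟨b₁, b₂⟩ ha hb
    have h : (a₁ * b₁) * (a₂ * b₂)⁻¹ = (a₁ * (b₁ * b₂⁻¹) * a₁⁻¹) * (a₁ * a₂⁻¹) := by group
    simp only [Set.mem_setOf_eq] at ha hb
    show a₁ * b₁ * (a₂ * b₂)⁻¹ ∈ L
    rw [h]
    exact mul_mem (hN.conj_mem _ hb a₁) ha
  inv_mem' := by
    rintro ⟨a₁, a₂⟩ ha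
    simp only [Set.mem_setOf_eq] at ha
    have h : a₁⁻¹ * (a₂⁻¹)⁻¹ = a₁⁻¹ * (a₁ * a₂⁻¹)⁻¹ * (a₁⁻¹)⁻¹ := by group
    show a₁⁻¹ * (a₂⁻¹)⁻¹ ∈ L
    rw [h]
    exact hN.conj_mem _ (L.inv_mem ha) a₁⁻¹

/-- **Lemma 2.7.** The commutator subgroup of `G ×_L G` equals
`[G,G] ×_{⁅G,L⁆} [G,G] = {(a₁,a₂) ∈ [G,G] × [G,G] : a₁a₂⁻¹ ∈ ⁅G,L⁆}`. -/
theorem commutator_relProd {G : Type*} [Group G] (L : Subgroup G) [L.Normal] :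
    ∀ p : G × G, p ∈ ⁅relProd L, relProd L⁆ ↔
      p.1 ∈ commutator G ∧ p.2 ∈ commutator G ∧ p.1 * p.2⁻¹ ∈ ⁅(⊤ : Subgroup G), L⁆ := by
  intro p
  constructor
  · intro hp
    have hK : ⁅relProd L, relProd L⁆ ≤
        (relProd ⁅(⊤ : Subgroup G), L⁆) ⊓ ((commutator G).prod (commutator G)) := by
      rw [Subgroup.commutator_le]
      rintro ⟨a₁, a₂⟩ ha ⟨b₁, b₂⟩ hb
      have ha' : a₁ * a₂⁻¹ ∈ L := ha
      have hb' : b₁ * b₂⁻¹ ∈ L := hb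
      rw [Subgroup.mem_inf]
      constructor
      · show ⁅a₁, b₁⁆ * ⁅a₂, b₂⁆⁻¹ ∈ ⁅(⊤ : Subgroup G), L⁆
        have h := key_commutator L ha' hb' a₂ b₂
        simpa using h
      · rw [Subgroup.mem_prod]
        exact ⟨Subgroup.commutator_mem_commutator (Subgroup.mem_top _) (Subgroup.mem_top _),
          Subgroup.commutator_mem_commutator (Subgroup.mem_top _) (Subgroup.mem_top _)⟩
    have h := hK hp
    rw [Subgroup.mem_inf, Subgroup.mem_prod] at h
    exact ⟨h.2.1, h.2.2, h.1⟩
  · rintro ⟨h1, h2, h3⟩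
    have hdiag : ∀ b ∈ commutator G, ((b, b) : G × G) ∈ ⁅relProd L, relProd L⁆ := by
      intro b hb
      let Δ : G →* G × G := MonoidHom.prod (MonoidHom.id G) (MonoidHom.id G)
      have hΔ : Subgroup.map Δ ⊤ ≤ relProd L := by
        rintro ⟨x, y⟩ ⟨g, -, hg⟩
        obtain ⟨rfl, rfl⟩ := Prod.mk.injEq .. ▸ hg
        show g * g⁻¹ ∈ L
        simpa using L.one_mem
      have hmap : Subgroup.map Δ (commutator G) ≤ ⁅relProd L, relProd L⁆ := by
        rw [commutator_def, Subgroup.map_commutator]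
        exact Subgroup.commutator_mono hΔ hΔ
      exact hmap ⟨b, hb, rfl⟩
    have hleft : ∀ c ∈ ⁅(⊤ : Subgroup G), L⁆,
        ((c, 1) : G × G) ∈ ⁅relProd L, relProd L⁆ := by
      have hle : ⁅(⊤ : Subgroup G), L⁆ ≤
          Subgroup.comap (MonoidHom.inl G G) ⁅relProd L, relProd L⁆ := by
        rw [Subgroup.commutator_le]
        rintro g - l hl
        rw [Subgroup.mem_comap]
        have e : MonoidHom.inl G G ⁅g, l⁆ = ⁅((g, g) : G × G), (l, 1)⁆ := by
          simp [commutatorElement_def, Prod.ext_iff]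
        rw [e]
        refine Subgroup.commutator_mem_commutator ?_ ?_
        · show g * g⁻¹ ∈ L
          simpa using L.one_mem
        · show l * (1 : G)⁻¹ ∈ L
          simpa using hl
      intro c hc
      exact hle hc
    have hp : p = (p.1 * p.2⁻¹, 1) * (p.2, p.2) := by
      ext <;> simp
    rw [hp]
    exact mul_mem (hleft _ h3) (hdiag _ h2)
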